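/- In the ring of formal power series over ℚ in algebraically independent graded indeterminates X_1, X_2, … and a variable t, the identity ∑_{k ≥ 1} ((−1)^{k−1}/k) · ∑_{n ≥ 1} (t^{kn}/n) · ∑_{d ∣ n} μ(d) · X_{k·d}^{n/d} = log(1 − t²·X_2) − log(1 − t·X_1) holds. -/

import Mathlib

open Classical PowerSeries ArithmeticFunction

/-- Coefficientwise topology on power series in `t` over the ring of formal
power series in countably many indeterminates `X_0, X_1, …`; infinite sums are
computed coefficientwise. -/
noncomputable instance : TopologicalSpace (PowerSeries (MvPowerSeries ℕ ℚ)) :=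
  inferInstanceAs (TopologicalSpace ((Unit →₀ ℕ) → ((ℕ →₀ ℕ) → ℚ)))

/-- The indeterminate `X_d`, playing the role of the power sum `p_d`, viewed as
a constant power series in `t`. -/
noncomputable def Xv (d : ℕ) : PowerSeries (MvPowerSeries ℕ ℚ) :=
  PowerSeries.C (MvPowerSeries.X d)

/-- The formal logarithm `log F = ∑_{n≥1} (−1)^{n−1} (F−1)^n / n` (the intended
value when `F − 1` has positive order). -/
noncomputable def logS (F : PowerSeries (MvPowerSeries ℕ ℚ)) :
    PowerSeries (MvPowerSeries ℕ ℚ) :=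
  ∑' (n : ℕ), if 1 ≤ n then (((-1 : ℚ) ^ (n - 1) / n) • (F - 1) ^ n) else 0

noncomputable instance : TopologicalSpace (MvPowerSeries ℕ ℚ) :=
  inferInstanceAs (TopologicalSpace ((ℕ →₀ ℕ) → ℚ))

instance : T2Space (MvPowerSeries ℕ ℚ) := inferInstanceAs (T2Space ((ℕ →₀ ℕ) → ℚ))

instance : T2Space (PowerSeries (MvPowerSeries ℕ ℚ)) :=
  inferInstanceAs (T2Space ((Unit →₀ ℕ) → ((ℕ →₀ ℕ) → ℚ)))

local notation "Rr" => MvPowerSeries ℕ ℚ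

lemma smul_C (q : ℚ) (x : Rr) :
    q • (PowerSeries.C x) = PowerSeries.C (q • x) := by
  ext m
  rw [PowerSeries.coeff_smul, PowerSeries.coeff_C, PowerSeries.coeff_C]
  split_ifs <;> simp

/-- the inner Rr-valued sum -/
noncomputable def w (k n : ℕ) : Rr :=
  ∑ d ∈ n.divisors, ((moebius d : ℚ)) • (MvPowerSeries.X (k * d) : Rr) ^ (n / d)

noncomputable def term (k n : ℕ) : PowerSeries Rr :=
  if 1 ≤ k ∧ 1 ≤ n then
    (((-1 : ℚ) ^ (k - 1) / k) * ((n : ℚ))⁻¹) •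
      ((PowerSeries.X : PowerSeries Rr) ^ (k * n) *
        ∑ d ∈ n.divisors, ((moebius d : ℚ)) • (Xv (k * d)) ^ (n / d))
  else 0

lemma term_eq (k n : ℕ) :
    term k n = if 1 ≤ k ∧ 1 ≤ n then
      (((-1 : ℚ) ^ (k - 1) / k) * ((n : ℚ))⁻¹) •
        ((PowerSeries.X : PowerSeries Rr) ^ (k * n) * PowerSeries.C (w k n))
    else 0 := by
  have hs : (∑ d ∈ n.divisors, ((moebius d : ℚ)) • (Xv (k * d)) ^ (n / d))
      = PowerSeries.C (w k n) := by
    rw [w, map_sum]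
    apply Finset.sum_congr rfl
    intro d _
    rw [Xv, ← map_pow, smul_C]
  rw [term, hs]

lemma coeff_term (k n M : ℕ) :
    PowerSeries.coeff M (term k n)
      = if (1 ≤ k ∧ 1 ≤ n) ∧ k * n = M then
          ((((-1 : ℚ) ^ (k - 1) / k) * ((n : ℚ))⁻¹)) • w k n
        else 0 := by
  rw [term_eq]
  by_cases h : 1 ≤ k ∧ 1 ≤ n
  · rw [if_pos h, PowerSeries.coeff_smul, mul_comm ((PowerSeries.X : PowerSeries Rr) ^ (k*n)),
      PowerSeries.coeff_C_mul, PowerSeries.coeff_X_pow]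
    by_cases h2 : k * n = M
    · subst h2
      simp [h]
    · rw [if_neg (fun hc : M = k * n => h2 hc.symm), mul_zero, smul_zero,
        if_neg (fun hc => h2 hc.2)]
  · rw [if_neg h, if_neg (fun hc => h hc.1)]
    simp

lemma coeff_tsum' {F : ℕ → PowerSeries Rr} (hf : Summable F) (M : ℕ) :
    PowerSeries.coeff M (∑' n, F n) = ∑' n, PowerSeries.coeff M (F n) := by
  have := tsum_apply (L := SummationFilter.unconditional ℕ) (X := fun _ : Unit →₀ ℕ => (ℕ →₀ ℕ) → ℚ) (f := fun n => (F n : (Unit →₀ ℕ) → ((ℕ →₀ ℕ) → ℚ))) (x := Finsupp.single () M) hf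
  exact this

lemma summable_PS {F : ℕ → PowerSeries Rr}
    (h : ∀ M n, M < n → PowerSeries.coeff M (F n) = 0) : Summable F := by
  have : Summable (fun n => (F n : (Unit →₀ ℕ) → ((ℕ →₀ ℕ) → ℚ))) := by
    apply Pi.summable.mpr
    intro m
    apply summable_of_ne_finset_zero (s := Finset.range (m () + 1))
    intro n hn
    simp only [Finset.mem_range, not_lt] at hn
    have hm : m = Finsupp.single () (m ()) := Finsupp.unique_single m
    have := h (m ()) n (by omega)
    rw [hm]
    exact this
  exact this

lemma summable_term (k : ℕ) : Summable (term k) := by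
  apply summable_PS
  intro M n hMn
  rw [coeff_term, if_neg]
  rintro ⟨⟨hk, hn⟩, hkn⟩
  have : n ≤ k * n := Nat.le_mul_of_pos_left n hk
  omega

noncomputable def gk (k : ℕ) : PowerSeries Rr := ∑' n, term k n

lemma coeff_gk (k M : ℕ) :
    PowerSeries.coeff M (gk k)
      = if 1 ≤ k ∧ k ∣ M ∧ 1 ≤ M then
          ((((-1 : ℚ) ^ (k - 1) / k) * (((M / k : ℕ) : ℚ))⁻¹)) • w k (M / k)
        else 0 := by
  rw [gk, coeff_tsum' (summable_term k) M]
  by_cases h : 1 ≤ k ∧ k ∣ M ∧ 1 ≤ M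
  · obtain ⟨hk, hkM, hM⟩ := h
    rw [tsum_eq_single (M / k) ?_]
    · rw [coeff_term, if_pos, if_pos ⟨hk, hkM, hM⟩]
      refine ⟨⟨hk, ?_⟩, Nat.mul_div_cancel' hkM⟩
      exact Nat.div_pos (Nat.le_of_dvd hM hkM) hk
    · intro n hn
      rw [coeff_term, if_neg]
      rintro ⟨⟨hk', hn'⟩, hkn⟩
      exact hn (by rw [← hkn, Nat.mul_div_cancel_left n hk])
  · have hz : ∀ n, PowerSeries.coeff M (term k n) = 0 := by
      intro n
      rw [coeff_term, if_neg]
      rintro ⟨⟨hk, hn⟩, hkn⟩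
      exact h ⟨hk, ⟨n, hkn.symm⟩, hkn ▸ Nat.mul_pos hk hn⟩
    rw [if_neg h]
    simp only [hz, tsum_zero]

lemma summable_gk : Summable gk := by
  apply summable_PS
  intro M k hMk
  rw [coeff_gk, if_neg]
  rintro ⟨hk, hkM, hM⟩
  have := Nat.le_of_dvd hM hkM
  omega

noncomputable def lterm (j : ℕ) (x : Rr) (n : ℕ) : PowerSeries Rr :=
  if 1 ≤ n then
    (((-1 : ℚ) ^ (n - 1) / n) •
      ((1 - PowerSeries.X ^ j * PowerSeries.C x) - 1) ^ n)
  else 0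

lemma coeff_lterm (j : ℕ) (x : Rr) (n M : ℕ) :
    PowerSeries.coeff M (lterm j x n)
      = if 1 ≤ n ∧ j * n = M then (-((n : ℚ))⁻¹) • x ^ n else 0 := by
  rw [lterm]
  by_cases hn : 1 ≤ n
  · rw [if_pos hn]
    have h1 : ((1 - PowerSeries.X ^ j * PowerSeries.C x) - 1)
        = -(PowerSeries.X ^ j * PowerSeries.C x) := by ring
    have hsc : ((-1 : ℚ) ^ (n - 1) / n) * (-1 : ℚ) ^ n = -((n : ℚ))⁻¹ := by
      have h2 : (-1 : ℚ) ^ (n - 1) * (-1 : ℚ) ^ n = -1 := by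
        rw [← pow_add]
        have h3 : n - 1 + n = 2 * (n - 1) + 1 := by omega
        rw [h3, pow_succ, pow_mul]
        norm_num
      rw [div_mul_eq_mul_div, h2]
      rw [div_eq_mul_inv, neg_one_mul]
    rw [h1, ← neg_one_smul ℚ (PowerSeries.X ^ j * PowerSeries.C x), smul_pow,
      mul_pow, ← pow_mul, ← map_pow, PowerSeries.coeff_smul, PowerSeries.coeff_smul,
      mul_comm ((PowerSeries.X : PowerSeries Rr) ^ (j * n)), PowerSeries.coeff_C_mul,
      PowerSeries.coeff_X_pow, smul_smul, hsc]
    by_cases h2 : j * n = M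
    · subst h2
      simp [hn]
    · rw [if_neg (fun hc : M = j * n => h2 hc.symm), mul_zero, smul_zero,
        if_neg (fun hc => h2 hc.2)]
  · rw [if_neg hn, if_neg (fun hc => hn hc.1)]
    simp

lemma summable_lterm (j : ℕ) (hj : 1 ≤ j) (x : Rr) : Summable (lterm j x) := by
  apply summable_PS
  intro M n hMn
  rw [coeff_lterm, if_neg]
  rintro ⟨hn, hjn⟩
  have : n ≤ j * n := Nat.le_mul_of_pos_left n hj
  omega

lemma coeff_logS (j : ℕ) (hj : 1 ≤ j) (x : Rr) (M : ℕ) :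
    PowerSeries.coeff M (logS (1 - PowerSeries.X ^ j * PowerSeries.C x))
      = if j ∣ M ∧ 1 ≤ M then (-(((M / j : ℕ) : ℚ))⁻¹) • x ^ (M / j) else 0 := by
  have hL : logS (1 - PowerSeries.X ^ j * PowerSeries.C x) = ∑' n, lterm j x n := rfl
  rw [hL, coeff_tsum' (summable_lterm j hj x) M]
  by_cases h : j ∣ M ∧ 1 ≤ M
  · obtain ⟨hjM, hM⟩ := h
    rw [tsum_eq_single (M / j) ?_]
    · rw [coeff_lterm, if_pos ⟨Nat.div_pos (Nat.le_of_dvd hM hjM) hj, Nat.mul_div_cancel' hjM⟩,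
        if_pos ⟨hjM, hM⟩]
    · intro n hn
      rw [coeff_lterm, if_neg]
      rintro ⟨hn', hjn⟩
      exact hn (by rw [← hjn, Nat.mul_div_cancel_left n hj])
  · have hz : ∀ n, PowerSeries.coeff M (lterm j x n) = 0 := by
      intro n
      rw [coeff_lterm, if_neg]
      rintro ⟨hn, hjn⟩
      exact h ⟨⟨n, hjn.symm⟩, hjn ▸ Nat.mul_pos hj hn⟩
    rw [if_neg h]
    simp only [hz, tsum_zero]

lemma triple_swap {A : Type*} [AddCommMonoid A] (M : ℕ) (f : ℕ → ℕ → ℕ → A) :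
    ∑ p ∈ M.divisorsAntidiagonal, ∑ q ∈ p.2.divisorsAntidiagonal, f p.1 q.1 q.2
      = ∑ p ∈ M.divisorsAntidiagonal, ∑ q ∈ p.1.divisorsAntidiagonal, f q.1 q.2 p.2 := by
  rw [Finset.sum_sigma' M.divisorsAntidiagonal (fun p => p.2.divisorsAntidiagonal)
      (fun p q => f p.1 q.1 q.2),
    Finset.sum_sigma' M.divisorsAntidiagonal (fun p => p.1.divisorsAntidiagonal)
      (fun p q => f q.1 q.2 p.2)]
  refine Finset.sum_nbij' (fun x => ⟨(x.1.1 * x.2.1, x.2.2), (x.1.1, x.2.1)⟩)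
    (fun y => ⟨(y.2.1, y.2.2 * y.1.2), (y.2.2, y.1.2)⟩) ?_ ?_ ?_ ?_ ?_
  · rintro ⟨⟨k, n⟩, ⟨d, j⟩⟩ hx
    simp only [Finset.mem_sigma, Nat.mem_divisorsAntidiagonal] at hx ⊢
    obtain ⟨⟨h1, h2⟩, ⟨h3, h4⟩⟩ := hx
    refine ⟨⟨by rw [mul_assoc, h3, h1], h2⟩, trivial, ?_⟩
    intro h
    rcases Nat.mul_eq_zero.mp h with hk | hd
    · subst hk
      simp at h1
      exact h2 (by omega)
    · subst hd
      simp at h3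
      exact h4 (by omega)
  · rintro ⟨⟨e, j⟩, ⟨k, d⟩⟩ hy
    simp only [Finset.mem_sigma, Nat.mem_divisorsAntidiagonal] at hy ⊢
    obtain ⟨⟨h1, h2⟩, ⟨h3, h4⟩⟩ := hy
    refine ⟨⟨by rw [← mul_assoc, h3, h1], h2⟩, trivial, ?_⟩
    intro h
    rcases Nat.mul_eq_zero.mp h with hd | hj
    · subst hd
      simp at h3
      exact h4 (by omega)
    · subst hj
      simp at h1
      exact h2 (by omega)
  · rintro ⟨⟨k, n⟩, ⟨d, j⟩⟩ hx
    simp only [Finset.mem_sigma, Nat.mem_divisorsAntidiagonal] at hx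
    obtain ⟨⟨h1, h2⟩, ⟨h3, h4⟩⟩ := hx
    simp [h3]
  · rintro ⟨⟨e, j⟩, ⟨k, d⟩⟩ hy
    simp only [Finset.mem_sigma, Nat.mem_divisorsAntidiagonal] at hy
    obtain ⟨⟨h1, h2⟩, ⟨h3, h4⟩⟩ := hy
    simp [h3]
  · rintro ⟨⟨k, n⟩, ⟨d, j⟩⟩ _
    rfl

lemma sum_mu (e : ℕ) :
    ∑ i ∈ e.divisors, ((moebius i : ℤ) : ℚ) = if e = 1 then 1 else 0 := by
  have h := congrArg (fun f : ArithmeticFunction ℚ => f e)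
    (ArithmeticFunction.coe_moebius_mul_coe_zeta (R := ℚ))
  simp only [ArithmeticFunction.coe_mul_zeta_apply, ArithmeticFunction.one_apply,
    ArithmeticFunction.intCoe_apply] at h
  exact h

lemma sum_mu_anti (e : ℕ) :
    ∑ q ∈ e.divisorsAntidiagonal, ((moebius q.2 : ℤ) : ℚ) = if e = 1 then 1 else 0 := by
  rw [Nat.sum_divisorsAntidiagonal' (f := fun _ y => ((moebius y : ℤ) : ℚ))]
  exact sum_mu e

lemma key (e : ℕ) (he : e ≠ 0) :
    ∑ q ∈ e.divisorsAntidiagonal, ((-1 : ℚ) ^ (q.1 - 1) * ((moebius q.2 : ℤ) : ℚ))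
      = (if e = 1 then 1 else 0) - 2 * (if e = 2 then 1 else 0) := by
  have hsplit : ∀ q ∈ e.divisorsAntidiagonal,
      ((-1 : ℚ) ^ (q.1 - 1) * ((moebius q.2 : ℤ) : ℚ))
        = ((moebius q.2 : ℤ) : ℚ)
          - 2 * (if 2 ∣ q.1 then ((moebius q.2 : ℤ) : ℚ) else 0) := by
    intro q hq
    obtain ⟨h1, h2⟩ := Nat.mem_divisorsAntidiagonal.mp hq
    have hq1 : q.1 ≠ 0 := by
      rintro h
      rw [h] at h1
      simp at h1
      exact h2 (by omega)
    by_cases hpar : 2 ∣ q.1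
    · have : Odd (q.1 - 1) := by
        obtain ⟨c, hc⟩ := hpar
        exact ⟨c - 1, by omega⟩
      rw [this.neg_one_pow, if_pos hpar]
      ring
    · have : Even (q.1 - 1) := by
        rcases Nat.even_or_odd q.1 with hh | hh
        · exact absurd hh.two_dvd hpar
        · obtain ⟨c, hc⟩ := hh
          exact ⟨c, by omega⟩
      rw [this.neg_one_pow, if_neg hpar]
      ring
  rw [Finset.sum_congr rfl hsplit, Finset.sum_sub_distrib, sum_mu_anti]
  congr 1
  rw [← Finset.mul_sum]
  congr 1
  -- ∑ q, ite (2 ∣ q.1) (μ q.2) 0 = if e = 2 then 1 else 0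
  by_cases h2 : 2 ∣ e
  · have hb : (∑ q ∈ e.divisorsAntidiagonal,
        (if 2 ∣ q.1 then ((moebius q.2 : ℤ) : ℚ) else 0))
        = ∑ q ∈ (e / 2).divisorsAntidiagonal, ((moebius q.2 : ℤ) : ℚ) := by
      rw [← Finset.sum_filter]
      refine Finset.sum_nbij' (fun q => (q.1 / 2, q.2)) (fun q => (2 * q.1, q.2))
        ?_ ?_ ?_ ?_ ?_
      · rintro ⟨a, b⟩ hq
        simp only [Finset.mem_filter, Nat.mem_divisorsAntidiagonal] at hq
        obtain ⟨⟨hab, _⟩, hda⟩ := hq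
        obtain ⟨c, rfl⟩ := hda
        simp only [Nat.mem_divisorsAntidiagonal]
        constructor
        · rw [Nat.mul_div_cancel_left c (by norm_num), ← hab, mul_assoc,
            Nat.mul_div_cancel_left _ (by norm_num : 0 < 2)]
        · omega
      · rintro ⟨a, b⟩ hq
        simp only [Nat.mem_divisorsAntidiagonal] at hq
        obtain ⟨hab, hne⟩ := hq
        simp only [Finset.mem_filter, Nat.mem_divisorsAntidiagonal]
        refine ⟨⟨?_, he⟩, ⟨a, rfl⟩⟩
        rw [mul_assoc, hab, Nat.mul_div_cancel' h2]
      · rintro ⟨a, b⟩ hq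
        simp only [Finset.mem_filter, Nat.mem_divisorsAntidiagonal] at hq
        obtain ⟨⟨hab, _⟩, hda⟩ := hq
        obtain ⟨c, rfl⟩ := hda
        simp [Nat.mul_div_cancel_left c (by norm_num : 0 < 2)]
      · rintro ⟨a, b⟩ hq
        simp [Nat.mul_div_cancel_left a (by norm_num : 0 < 2)]
      · rintro ⟨a, b⟩ _
        rfl
    rw [hb, sum_mu_anti]
    have : e / 2 = 1 ↔ e = 2 := by
      obtain ⟨c, rfl⟩ := h2
      omega
    simp only [this]
  · have hz : ∀ q ∈ e.divisorsAntidiagonal,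
        (if 2 ∣ q.1 then ((moebius q.2 : ℤ) : ℚ) else 0) = 0 := by
      rintro ⟨a, b⟩ hq
      obtain ⟨hab, _⟩ := Nat.mem_divisorsAntidiagonal.mp hq
      rw [if_neg]
      intro hda
      exact h2 (hda.trans (Dvd.intro b hab))
    rw [Finset.sum_congr rfl hz, Finset.sum_const_zero, if_neg (fun h => h2 (by rw [h]))]

lemma main_alg (M : ℕ) (hM : 1 ≤ M) :
    (∑ k ∈ Finset.range (M + 1),
      if 1 ≤ k ∧ k ∣ M ∧ 1 ≤ M then
        ((((-1 : ℚ) ^ (k - 1) / k) * (((M / k : ℕ) : ℚ))⁻¹)) • w k (M / k)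
      else 0)
    = (if 2 ∣ M ∧ 1 ≤ M then
        (-(((M / 2 : ℕ) : ℚ))⁻¹) • (MvPowerSeries.X 2 : Rr) ^ (M / 2) else 0)
      - (if 1 ∣ M ∧ 1 ≤ M then
        (-(((M / 1 : ℕ) : ℚ))⁻¹) • (MvPowerSeries.X 1 : Rr) ^ (M / 1) else 0) := by
  have hM0 : M ≠ 0 := by omega
  -- step 1 : restrict to divisors
  rw [← Finset.sum_filter]
  have hset : (Finset.range (M + 1)).filter (fun k => 1 ≤ k ∧ k ∣ M ∧ 1 ≤ M)
      = M.divisors := by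
    ext k
    simp only [Finset.mem_filter, Finset.mem_range, Nat.mem_divisors, Nat.lt_succ_iff]
    constructor
    · rintro ⟨_, _, hkM, _⟩
      exact ⟨hkM, hM0⟩
    · rintro ⟨hkM, _⟩
      have hk0 : k ≠ 0 := by
        rintro rfl
        exact hM0 (Nat.eq_zero_of_zero_dvd hkM)
      exact ⟨Nat.le_of_dvd (by omega) hkM, by omega, hkM, hM⟩
  rw [hset]
  -- step 2 : to divisorsAntidiagonal
  rw [← Nat.sum_divisorsAntidiagonal
    (fun k n => ((((-1 : ℚ) ^ (k - 1) / k) * ((n : ℚ))⁻¹)) • w k n)]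
  -- step 3-5 : expand w, push scalars
  have hstep : ∀ p ∈ M.divisorsAntidiagonal,
      ((((-1 : ℚ) ^ (p.1 - 1) / p.1) * ((p.2 : ℚ))⁻¹)) • w p.1 p.2
        = ∑ q ∈ p.2.divisorsAntidiagonal,
            ((((-1 : ℚ) ^ (p.1 - 1) * ((moebius q.1 : ℤ) : ℚ)) * ((M : ℚ))⁻¹))
              • (MvPowerSeries.X (p.1 * q.1) : Rr) ^ q.2 := by
    rintro ⟨a, b⟩ hp
    obtain ⟨hab, _⟩ := Nat.mem_divisorsAntidiagonal.mp hp
    have ha0 : a ≠ 0 := by rintro rfl; simp at hab; exact hM0 hab.symm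
    have hb0 : b ≠ 0 := by rintro rfl; simp at hab; exact hM0 hab.symm
    rw [w, ← Nat.sum_divisorsAntidiagonal
      (fun d j => ((moebius d : ℤ) : ℚ) • (MvPowerSeries.X (a * d) : Rr) ^ j),
      Finset.smul_sum]
    apply Finset.sum_congr rfl
    rintro ⟨d, j⟩ _
    rw [smul_smul]
    congr 1
    have hc : ((a : ℚ)) * ((b : ℚ)) = (M : ℚ) := by exact_mod_cast congrArg Nat.cast hab
    have ha : (a : ℚ) ≠ 0 := Nat.cast_ne_zero.mpr ha0
    have hb : (b : ℚ) ≠ 0 := Nat.cast_ne_zero.mpr hb0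
    rw [← hc, mul_inv, div_eq_mul_inv]
    ring
  rw [Finset.sum_congr rfl hstep]
  -- step 6 : swap
  rw [triple_swap M (fun k d j =>
    ((((-1 : ℚ) ^ (k - 1) * ((moebius d : ℤ) : ℚ)) * ((M : ℚ))⁻¹))
      • (MvPowerSeries.X (k * d) : Rr) ^ j)]
  have hstep2 : ∀ p ∈ M.divisorsAntidiagonal,
      (∑ q ∈ p.1.divisorsAntidiagonal,
        ((((-1 : ℚ) ^ (q.1 - 1) * ((moebius q.2 : ℤ) : ℚ)) * ((M : ℚ))⁻¹))
          • (MvPowerSeries.X (q.1 * q.2) : Rr) ^ p.2)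
      = (((if p.1 = 1 then (1:ℚ) else 0) - 2 * (if p.1 = 2 then (1:ℚ) else 0)) * ((M : ℚ))⁻¹)
          • (MvPowerSeries.X p.1 : Rr) ^ p.2 := by
    rintro ⟨e, j⟩ hp
    obtain ⟨hej, _⟩ := Nat.mem_divisorsAntidiagonal.mp hp
    have he0 : e ≠ 0 := by rintro rfl; simp at hej; exact hM0 hej.symm
    have hfix : ∀ q ∈ e.divisorsAntidiagonal,
        ((((-1 : ℚ) ^ (q.1 - 1) * ((moebius q.2 : ℤ) : ℚ)) * ((M : ℚ))⁻¹))
          • (MvPowerSeries.X (q.1 * q.2) : Rr) ^ j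
        = ((((-1 : ℚ) ^ (q.1 - 1) * ((moebius q.2 : ℤ) : ℚ)) * ((M : ℚ))⁻¹))
          • (MvPowerSeries.X e : Rr) ^ j := by
      rintro ⟨u, v⟩ hq
      obtain ⟨huv, _⟩ := Nat.mem_divisorsAntidiagonal.mp hq
      rw [huv]
    rw [Finset.sum_congr rfl hfix, ← Finset.sum_smul, ← Finset.sum_mul, key e he0]
  rw [Finset.sum_congr rfl hstep2]
  -- step 7 : extract the two surviving terms
  have hstep3 : ∀ p ∈ M.divisorsAntidiagonal,
      (((if p.1 = 1 then (1:ℚ) else 0) - 2 * (if p.1 = 2 then (1:ℚ) else 0)) * ((M : ℚ))⁻¹)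
          • (MvPowerSeries.X p.1 : Rr) ^ p.2
      = (if p = ((1 : ℕ), M) then ((M : ℚ))⁻¹ • (MvPowerSeries.X 1 : Rr) ^ M else 0)
        + (if p = ((2 : ℕ), M / 2) then
            (-2 * ((M : ℚ))⁻¹) • (MvPowerSeries.X 2 : Rr) ^ (M / 2) else 0) := by
    rintro ⟨e, j⟩ hp
    obtain ⟨hej, _⟩ := Nat.mem_divisorsAntidiagonal.mp hp
    by_cases h1 : e = 1
    · subst h1
      have : j = M := by omega
      subst this
      norm_num
    · by_cases h2 : e = 2
      · subst h2
        have : j = M / 2 := by omega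
        subst this
        have : ((2:ℕ), M/2) ≠ ((1:ℕ), M) := by simp
        rw [if_neg h1, if_pos rfl, if_neg this, if_pos rfl]
        simp
      · have hne1 : ((e, j)) ≠ ((1:ℕ), M) := by simp [Prod.ext_iff]; intro h; exact absurd h h1
        have hne2 : ((e, j)) ≠ ((2:ℕ), M / 2) := by simp [Prod.ext_iff]; intro h; exact absurd h h2
        rw [if_neg h1, if_neg h2, if_neg hne1, if_neg hne2]
        simp
  rw [Finset.sum_congr rfl hstep3, Finset.sum_add_distrib,
    Finset.sum_ite_eq' M.divisorsAntidiagonal ((1:ℕ), M),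
    Finset.sum_ite_eq' M.divisorsAntidiagonal ((2:ℕ), M / 2)]
  have hmem1 : ((1:ℕ), M) ∈ M.divisorsAntidiagonal := by
    rw [Nat.mem_divisorsAntidiagonal]
    exact ⟨one_mul M, hM0⟩
  rw [if_pos hmem1]
  have h1M : (1 : ℕ) ∣ M ∧ 1 ≤ M := ⟨one_dvd M, hM⟩
  rw [if_pos h1M]
  by_cases h2M : 2 ∣ M
  · have hmem2 : ((2:ℕ), M / 2) ∈ M.divisorsAntidiagonal := by
      rw [Nat.mem_divisorsAntidiagonal]
      exact ⟨Nat.mul_div_cancel' h2M, hM0⟩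
    rw [if_pos hmem2, if_pos ⟨h2M, hM⟩]
    have hc2 : ((M / 2 : ℕ) : ℚ) = (M : ℚ) / 2 := by
      rw [Nat.cast_div h2M (by norm_num)]
      norm_num
    rw [hc2, Nat.div_one]
    have hMQ : (M : ℚ) ≠ 0 := Nat.cast_ne_zero.mpr hM0
    have : -((M : ℚ) / 2)⁻¹ = -2 * ((M : ℚ))⁻¹ := by
      field_simp
    rw [this, neg_smul, sub_neg_eq_add, add_comm]
  · have hmem2 : ((2:ℕ), M / 2) ∉ M.divisorsAntidiagonal := by
      rw [Nat.mem_divisorsAntidiagonal]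
      rintro ⟨h, _⟩
      exact h2M (Dvd.intro _ h)
    rw [if_neg hmem2, if_neg (fun hc => h2M hc.1), Nat.div_one, add_zero, zero_sub]
    simp

/-- Logarithmic form of the identity `E[Lie(t)] = (1 − t² p₂)/(1 − t p₁)`:
`∑_{k≥1} ((−1)^{k−1}/k) ∑_{n≥1} (t^{kn}/n) ∑_{d|n} μ(d) X_{kd}^{n/d}
   = log(1 − t² X_2) − log(1 − t X_1)`. -/
theorem log_Thrall_E :
    (∑' (k : ℕ), ∑' (n : ℕ),
        (if 1 ≤ k ∧ 1 ≤ n then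
            (((-1 : ℚ) ^ (k - 1) / k) * ((n : ℚ))⁻¹) •
              ((PowerSeries.X : PowerSeries (MvPowerSeries ℕ ℚ)) ^ (k * n) *
                ∑ d ∈ n.divisors, ((moebius d : ℚ)) • (Xv (k * d)) ^ (n / d))
          else 0))
      = logS (1 - PowerSeries.X ^ 2 * Xv 2) - logS (1 - PowerSeries.X * Xv 1) := by
  have hx1 : (PowerSeries.X : PowerSeries Rr) * Xv 1
      = PowerSeries.X ^ 1 * PowerSeries.C (MvPowerSeries.X 1) := by
    rw [pow_one]; rfl
  rw [hx1]
  show (∑' k, gk k)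
      = logS (1 - PowerSeries.X ^ 2 * PowerSeries.C (MvPowerSeries.X 2))
        - logS (1 - PowerSeries.X ^ 1 * PowerSeries.C (MvPowerSeries.X 1))
  apply PowerSeries.ext
  intro M
  rw [map_sub, coeff_tsum' summable_gk M, coeff_logS 2 (by norm_num),
    coeff_logS 1 (by norm_num)]
  rw [tsum_eq_sum (s := Finset.range (M + 1)) ?van]
  case van =>
    intro k hk
    simp only [Finset.mem_range, not_lt] at hk
    rw [coeff_gk, if_neg]
    rintro ⟨h1, h2, h3⟩
    have := Nat.le_of_dvd h3 h2
    omega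
  simp only [coeff_gk]
  by_cases hM : 1 ≤ M
  · exact main_alg M hM
  · have hM0 : M = 0 := by omega
    subst hM0
    norm_num
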